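/- Let (I,(·,·)) be a Cartan datum, let r ≥ 2 and N ≥ 2 be integers, and let η = {i_1,…,i_m} and η' be disjoint subsets of I such that (α_i,α_{i'}) = 0 for distinct i, i' ∈ η, (α_j,α_{j'}) = 0 for distinct j, j' ∈ η', and d_{i_a} = d for all a (a common value d). Suppose for each a ∈ {1,…,m} there is a subset A_a ⊆ η' with |A_a| = N−1 such that a_{i_a j} = 1 − r for every j ∈ A_a and (α_{i_a},α_j) = 0 for every j ∈ η' ∖ A_a. Set L = (N−1)(r−1) + 1 and fix an enumeration of η'. Then the identity Σ_{(k_1,…,k_m) ∈ {0,…,L}^m} (−1)^{k_1+⋯+k_m} · [L ¦ k_1]_d ⋯ [L ¦ k_m]_d · (f_{i_1}^{k_1} ⋯ f_{i_m}^{k_m}) · (∏_{j∈η'} f_j) · (f_{i_1}^{L−k_1} ⋯ f_{i_m}^{L−k_m}) = 0 holds in U_q^-. -/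

import Mathlib

noncomputable section

open Finset

/-- The field `ℚ(q)` of rational functions. -/
abbrev K : Type := RatFunc ℚ

/-- The variable `q`. -/
def q : K := RatFunc.X

/-- The balanced `q`-integer `[n]_d = (q^{dn} - q^{-dn})/(q^d - q^{-d})`. -/
def qintd (d : ℤ) (n : ℤ) : K := (q ^ (d * n) - q ^ (-(d * n))) / (q ^ d - q ^ (-d))

/-- The `q`-factorial `[m]_d^! = [1]_d ⋯ [m]_d`. -/
def qfactd (d : ℤ) (m : ℕ) : K := ∏ t ∈ Finset.range m, qintd d (t + 1)

/-- The `q`-binomial coefficient `[n ¦ m]_d = [n]_d ⋯ [n-m+1]_d/[m]_d^!`. -/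
def qbinomd (d : ℤ) (n : ℤ) (m : ℕ) : K := (∏ t ∈ Finset.range m, qintd d (n - t)) / qfactd d m

variable {I : Type} [Fintype I] [DecidableEq I]

/-- `d_i = (α_i,α_i)/2`. -/
def dd (form : I → I → ℤ) (i : I) : ℤ := form i i / 2

/-- `a_{ij} = 2(α_i,α_j)/(α_i,α_i)`. -/
def aij (form : I → I → ℤ) (i j : I) : ℤ := 2 * form i j / form i i

/-- The quantum Serre element
`Σ_{k=0}^{1−a_{ij}} (−1)^k [1−a_{ij} ¦ k]_{d_i} f_i^k f_j f_i^{1−a_{ij}−k}`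
in the free algebra. -/
def serre (form : I → I → ℤ) (i j : I) : FreeAlgebra K I :=
  ∑ k ∈ Finset.range ((1 - aij form i j).toNat + 1),
    ((-1 : K) ^ k * qbinomd (dd form i) (1 - aij form i j) k) •
      ((FreeAlgebra.ι K i) ^ k * FreeAlgebra.ι K j *
        (FreeAlgebra.ι K i) ^ ((1 - aij form i j).toNat - k))

/-- The relation imposing the quantum Serre relations. -/
def serreRel (form : I → I → ℤ) : FreeAlgebra K I → FreeAlgebra K I → Prop :=
  fun x y => ∃ i j, i ≠ j ∧ x = serre form i j ∧ y = 0

/-- The negative part `U_q^-` of the quantized enveloping algebra: the quotient of the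
free associative `ℚ(q)`-algebra on the `f_i` by the quantum Serre relations. -/
abbrev Uneg (form : I → I → ℤ) : Type := RingQuot (serreRel form)

/-- The generator `f_i` of `U_q^-`. -/
def fgen (form : I → I → ℤ) (i : I) : Uneg form :=
  RingQuot.mkAlgHom K (serreRel form) (FreeAlgebra.ι K i)


lemma q_ne_zero : (q : K) ≠ 0 := RatFunc.X_ne_zero

lemma q_pow_ne_one {n : ℕ} (hn : 0 < n) : (q : K) ^ n ≠ 1 := by
  intro h
  have : (RatFunc.X : K) ^ n = algebraMap (Polynomial ℚ) K (Polynomial.X ^ n) := by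
    simp [RatFunc.algebraMap_X]
  rw [q] at h
  rw [this] at h
  have h1 : algebraMap (Polynomial ℚ) K (Polynomial.X ^ n) = algebraMap (Polynomial ℚ) K 1 := by
    simpa using h
  have := RatFunc.algebraMap_injective ℚ h1
  have := congrArg Polynomial.natDegree this
  simp at this
  omega

lemma q_zpow_ne_one {z : ℤ} (hz : z ≠ 0) : (q : K) ^ z ≠ 1 := by
  rcases lt_or_gt_of_ne hz with h | h
  · intro hq1
    have : (q : K) ^ (-z) = 1 := by
      rw [zpow_neg, hq1, inv_one]
    have hz' : (0:ℤ) < -z := by omega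
    obtain ⟨n, hn⟩ : ∃ n : ℕ, -z = (n : ℤ) := ⟨(-z).toNat, by omega⟩
    rw [hn, zpow_natCast] at this
    exact q_pow_ne_one (by omega) this
  · intro hq1
    obtain ⟨n, hn⟩ : ∃ n : ℕ, z = (n : ℤ) := ⟨z.toNat, by omega⟩
    rw [hn, zpow_natCast] at hq1
    exact q_pow_ne_one (by exact_mod_cast hn ▸ h) hq1

lemma q_zpow_sub_ne_zero {a b : ℤ} (h : a ≠ b) : (q : K) ^ a - q ^ b ≠ 0 := by
  intro hc
  have : (q:K) ^ a = q ^ b := sub_eq_zero.mp hc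
  have : (q:K) ^ (a - b) = 1 := by
    rw [zpow_sub₀ q_ne_zero, this, div_self (zpow_ne_zero _ q_ne_zero)]
  exact q_zpow_ne_one (by omega) this

lemma qintd_ne_zero {d n : ℤ} (hd : 0 < d) (hn : 0 < n) : qintd d n ≠ 0 := by
  unfold qintd
  apply div_ne_zero
  · exact q_zpow_sub_ne_zero (by nlinarith)
  · exact q_zpow_sub_ne_zero (by omega)

lemma qintd_zero (d : ℤ) : qintd d 0 = 0 := by simp [qintd]

lemma qfactd_ne_zero {d : ℤ} (hd : 0 < d) (m : ℕ) : qfactd d m ≠ 0 := by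
  unfold qfactd
  apply Finset.prod_ne_zero_iff.mpr
  intro t _
  exact qintd_ne_zero hd (by positivity)

lemma qintd_add {d : ℤ} (hd : 0 < d) (a b : ℤ) :
    qintd d (a + b) = q ^ (d * b) * qintd d a + q ^ (-(d * a)) * qintd d b := by
  have hD : (q:K) ^ d - q ^ (-d) ≠ 0 := q_zpow_sub_ne_zero (by omega)
  unfold qintd
  rw [← mul_div_assoc, ← mul_div_assoc, ← add_div]
  congr 1
  have hq := q_ne_zero
  rw [mul_add, neg_add, zpow_add₀ hq, zpow_add₀ hq]
  ring

lemma qbinomd_zero (d : ℤ) (n : ℤ) : qbinomd d n 0 = 1 := by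
  simp [qbinomd, qfactd]

lemma qbinomd_self_succ (d : ℤ) (p : ℕ) : qbinomd d (p : ℤ) (p + 1) = 0 := by
  unfold qbinomd
  rw [Finset.prod_eq_zero (Finset.self_mem_range_succ p)]
  · simp
  · simp [qintd_zero]

lemma qfactd_succ (d : ℤ) (k : ℕ) : qfactd d (k + 1) = qfactd d k * qintd d (k + 1) := by
  unfold qfactd
  rw [Finset.prod_range_succ]

lemma qbinomd_pascal {d : ℤ} (hd : 0 < d) (n : ℤ) (k : ℕ) :
    qbinomd d n (k + 1) =
      q ^ (d * (k + 1)) * qbinomd d (n - 1) (k + 1)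
      + q ^ (-(d * (n - (k + 1)))) * qbinomd d (n - 1) k := by
  have hfk : qfactd d k ≠ 0 := qfactd_ne_zero hd k
  have hck : qintd d ((k:ℤ) + 1) ≠ 0 := qintd_ne_zero hd (by omega)
  have num1 : (∏ t ∈ Finset.range (k + 1), qintd d (n - t))
      = qintd d n * ∏ t ∈ Finset.range k, qintd d (n - 1 - t) := by
    rw [Finset.prod_range_succ']
    simp only [Nat.cast_zero, sub_zero]
    rw [mul_comm]
    congr 1
    apply Finset.prod_congr rfl
    intro t _
    congr 1
    push_cast
    ring
  have num2 : (∏ t ∈ Finset.range (k + 1), qintd d ((n - 1) - t))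
      = (∏ t ∈ Finset.range k, qintd d (n - 1 - t)) * qintd d (n - 1 - k) := by
    rw [Finset.prod_range_succ]
  have key : qintd d n = q ^ (d * ((k:ℤ) + 1)) * qintd d (n - 1 - k)
      + q ^ (-(d * (n - ((k:ℤ) + 1)))) * qintd d ((k:ℤ) + 1) := by
    have := qintd_add hd (n - ((k:ℤ)+1)) ((k:ℤ)+1)
    rw [show n - ((k:ℤ)+1) + ((k:ℤ)+1) = n from by ring] at this
    rw [this]
    congr 2
    ring
  unfold qbinomd
  rw [num1, num2, qfactd_succ]
  set Pk := ∏ t ∈ Finset.range k, qintd d (n - 1 - (t:ℤ)) with hPk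
  push_cast
  have h3 : Pk / qfactd d k
      = Pk * qintd d ((k:ℤ) + 1) / (qfactd d k * qintd d ((k:ℤ) + 1)) := by
    rw [mul_div_mul_right _ _ hck]
  rw [h3, ← mul_div_assoc, ← mul_div_assoc, ← add_div]
  congr 1
  rw [key]
  ring


section OpAlg
variable {A : Type*} [Ring A] [Algebra K A]

/-- The twisted commutator operator `x ↦ x F - c (F x)`. -/
def Pop (F : A) (c : K) (x : A) : A := x * F - c • (F * x)

lemma Pop_zero (F : A) (c : K) : Pop F c 0 = 0 := by simp [Pop]

lemma Pop_add (F : A) (c : K) (x y : A) : Pop F c (x + y) = Pop F c x + Pop F c y := by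
  simp only [Pop, add_mul, mul_add, smul_add]; abel

lemma Pop_smul (F : A) (c : K) (k : K) (x : A) : Pop F c (k • x) = k • Pop F c x := by
  simp only [Pop, smul_sub, smul_mul_assoc, mul_smul_comm, smul_smul, mul_comm]

lemma Pop_sum (F : A) (c : K) {ι : Type*} (s : Finset ι) (f : ι → A) :
    Pop F c (∑ i ∈ s, f i) = ∑ i ∈ s, Pop F c (f i) := by
  classical
  induction s using Finset.induction_on with
  | empty => simp [Pop_zero]
  | insert _ _ h ih => rw [Finset.sum_insert h, Finset.sum_insert h, Pop_add, ih]

lemma Pop_leibniz (F : A) (c₁ c₂ : K) (x y : A) :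
    Pop F (c₁ * c₂) (x * y) = x * Pop F c₂ y + c₂ • (Pop F c₁ x * y) := by
  simp only [Pop, mul_sub, sub_mul, smul_sub, smul_mul_assoc, mul_smul_comm, smul_smul]
  rw [mul_comm c₂ c₁]
  abel_nf
  rw [mul_assoc, mul_assoc, mul_assoc]
  abel

/-- Iterated operator: apply `Pop` with exponents `n-1, n-3, …, n-1-2(p-1)`. -/
def ch (F : A) (d : ℤ) (n : ℕ) : ℕ → A → A
  | 0, x => x
  | (p+1), x => Pop F (q ^ (d * ((n : ℤ) - 1 - 2 * p))) (ch F d n p x)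

lemma ch_zero_arg (F : A) (d : ℤ) (n : ℕ) (p : ℕ) : ch F d n p 0 = 0 := by
  induction p with
  | zero => rfl
  | succ p ih => rw [ch, ih, Pop_zero]

lemma ch_eq_zero_of_le (F : A) (d : ℤ) (n : ℕ) (x : A) {p p' : ℕ} (hp : p ≤ p')
    (h : ch F d n p x = 0) : ch F d n p' x = 0 := by
  induction p' with
  | zero => simpa [Nat.le_zero.mp hp] using h
  | succ p' ih =>
    rcases Nat.lt_or_ge p (p' + 1) with hlt | hge
    · rw [ch, ih (by omega), Pop_zero]
    · rwa [Nat.le_antisymm hp hge] at h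

/-- Closed formula for the iterated operator. -/
lemma ch_closed (F : A) {d : ℤ} (hd : 0 < d) (n : ℕ) (x : A) (p : ℕ) :
    ch F d n p x = ∑ k ∈ Finset.range (p + 1),
      ((-1 : K) ^ k * q ^ (d * (k * ((n : ℤ) - p))) * qbinomd d (p : ℤ) k) •
        (F ^ k * x * F ^ (p - k)) := by
  induction p with
  | zero => simp [ch, qbinomd_zero]
  | succ p ih =>
    rw [ch, ih, Pop_sum]
    have hterm : ∀ k ∈ Finset.range (p + 1),
        Pop F (q ^ (d * ((n : ℤ) - 1 - 2 * p)))
          ((((-1 : K) ^ k * q ^ (d * (k * ((n : ℤ) - p))) * qbinomd d (p : ℤ) k)) •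
            (F ^ k * x * F ^ (p - k)))
        = ((-1 : K) ^ k * q ^ (d * (k * ((n : ℤ) - p))) * qbinomd d (p : ℤ) k) •
            (F ^ k * x * F ^ (p + 1 - k))
          - (q ^ (d * ((n : ℤ) - 1 - 2 * p)) *
              ((-1 : K) ^ k * q ^ (d * (k * ((n : ℤ) - p))) * qbinomd d (p : ℤ) k)) •
            (F ^ (k + 1) * x * F ^ (p - k)) := by
      intro k hk
      have hk' : k ≤ p := by simpa [Nat.lt_succ_iff] using hk
      have e1 : F ^ k * x * F ^ (p - k) * F = F ^ k * x * F ^ (p + 1 - k) := by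
        rw [mul_assoc, ← pow_succ]
        congr 2
        omega
      have e2 : F * (F ^ k * x * F ^ (p - k)) = F ^ (k + 1) * x * F ^ (p - k) := by
        rw [← mul_assoc, ← mul_assoc, ← pow_succ']
      rw [Pop_smul]
      simp only [Pop]
      rw [e1, e2, smul_sub, smul_smul, mul_comm ((-1 : K) ^ k * q ^ (d * (k * ((n : ℤ) - p))) * qbinomd d (p : ℤ) k)]
    rw [Finset.sum_congr rfl hterm, Finset.sum_sub_distrib]
    have ext1 : ∑ k ∈ Finset.range (p + 1),
        (((-1 : K) ^ k * q ^ (d * (k * ((n : ℤ) - p))) * qbinomd d (p : ℤ) k)) •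
          (F ^ k * x * F ^ (p + 1 - k))
        = ∑ k ∈ Finset.range (p + 2),
        (((-1 : K) ^ k * q ^ (d * (k * ((n : ℤ) - p))) * qbinomd d (p : ℤ) k)) •
          (F ^ k * x * F ^ (p + 1 - k)) := by
      rw [Finset.sum_range_succ _ (p + 1), qbinomd_self_succ d p]
      simp
    rw [ext1, Finset.sum_range_succ' _ (p + 1), Finset.sum_range_succ' _ (p + 1)]
    simp only [Nat.succ_sub_succ, Nat.cast_zero, pow_zero, zero_mul, mul_zero, zpow_zero,
      one_mul, mul_one, qbinomd_zero, Nat.cast_succ, pow_succ, Nat.sub_zero]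
    rw [add_sub_right_comm]
    congr 1
    rw [← Finset.sum_sub_distrib]
    apply Finset.sum_congr rfl
    intro k hk
    have hk' : k ≤ p := by simpa [Nat.lt_succ_iff] using hk
    rw [← sub_smul]
    congr 1
    have hpas := qbinomd_pascal hd ((p : ℤ) + 1) k
    rw [show (p : ℤ) + 1 - 1 = (p : ℤ) from by ring] at hpas
    rw [show ((p : ℕ) + 1 : ℤ) = (p : ℤ) + 1 from by push_cast; ring] at *
    have hq := q_ne_zero
    have h1 : q ^ (d * (((k:ℤ) + 1) * ((n:ℤ) - (p:ℤ)))) =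
        q ^ (d * (((k:ℤ) + 1) * ((n:ℤ) - ((p:ℤ) + 1)))) * q ^ (d * ((k:ℤ) + 1)) := by
      rw [← zpow_add₀ hq]
      congr 1
      ring
    have h2 : q ^ (d * ((n:ℤ) - 1 - 2 * (p:ℤ))) * q ^ (d * ((k:ℤ) * ((n:ℤ) - (p:ℤ)))) =
        q ^ (d * (((k:ℤ) + 1) * ((n:ℤ) - ((p:ℤ) + 1)))) *
          q ^ (-(d * ((p:ℤ) + 1 - ((k:ℤ) + 1)))) := by
      rw [← zpow_add₀ hq, ← zpow_add₀ hq]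
      congr 1
      ring
    rw [hpas]
    linear_combination ((-1:K) ^ k * (-1) * qbinomd d (p:ℤ) (k+1)) * h1
      + ((-1:K) ^ k * (-1) * qbinomd d (p:ℤ) k) * h2

end OpAlg


section KillSec
variable {A : Type*} [Ring A] [Algebra K A]

/-- `x` is killed by the descending chain of twisted commutators of length `n`. -/
def Kill (F : A) (d : ℤ) (n : ℕ) (x : A) : Prop := ch F d n n x = 0

lemma Kill_one (F : A) (d : ℤ) : Kill F d 1 (1 : A) := by
  show Pop F _ (ch F d 1 0 1) = 0
  show Pop F (q ^ (d * ((1:ℤ) - 1 - 2 * (0:ℕ)))) (1 : A) = 0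
  norm_num [Pop]

lemma Kill_mul {F : A} {d : ℤ} {n m : ℕ} {x y : A}
    (hx : Kill F d (n + 1) x) (hy : Kill F d (m + 1) y) :
    Kill F d (n + m + 1) (x * y) := by
  classical
  set X : ℕ → A := fun a => ch F d (n + 1) a x with hXdef
  set Y : ℕ → A := fun b => ch F d (m + 1) b y with hYdef
  have hX0 : ∀ a, n + 1 ≤ a → X a = 0 := fun a ha => ch_eq_zero_of_le F d (n+1) x ha hx
  have hY0 : ∀ b, m + 1 ≤ b → Y b = 0 := fun b hb => ch_eq_zero_of_le F d (m+1) y hb hy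
  have claim : ∀ p : ℕ, ch F d (n + m + 1) p (x * y) ∈
      Submodule.span K ((fun ab : ℕ × ℕ => X ab.1 * Y ab.2) '' {ab | ab.1 + ab.2 = p}) := by
    intro p
    induction p with
    | zero =>
      apply Submodule.subset_span
      exact ⟨(0, 0), rfl, rfl⟩
    | succ p ih =>
      rw [ch]
      refine Submodule.span_induction ?_ ?_ ?_ ?_ ih
      · rintro z ⟨⟨a, b⟩, hab, rfl⟩
        simp only [Set.mem_setOf_eq] at hab
        have hsplit : q ^ (d * (((n + m + 1 : ℕ) : ℤ) - 1 - 2 * (p:ℤ)))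
            = q ^ (d * (((n + 1 : ℕ) : ℤ) - 1 - 2 * (a:ℤ)))
              * q ^ (d * (((m + 1 : ℕ) : ℤ) - 1 - 2 * (b:ℤ))) := by
          rw [← zpow_add₀ q_ne_zero]
          have hab' : (a : ℤ) + (b : ℤ) = (p : ℤ) := by exact_mod_cast congrArg Nat.cast hab
          have : d * (((n + m + 1 : ℕ) : ℤ) - 1 - 2 * (p:ℤ))
              = d * (((n + 1 : ℕ) : ℤ) - 1 - 2 * (a:ℤ)) + d * (((m + 1 : ℕ) : ℤ) - 1 - 2 * (b:ℤ)) := by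
            push_cast
            linear_combination (2 * d) * hab'
          rw [this]
        rw [hsplit, Pop_leibniz]
        apply Submodule.add_mem
        · apply Submodule.subset_span
          exact ⟨(a, b + 1), by simp only [Set.mem_setOf_eq]; omega, rfl⟩
        · apply Submodule.smul_mem
          apply Submodule.subset_span
          exact ⟨(a + 1, b), by simp only [Set.mem_setOf_eq]; omega, rfl⟩
      · rw [Pop_zero]; exact Submodule.zero_mem _
      · intro u v _ _ hu hv
        rw [Pop_add]; exact Submodule.add_mem _ hu hv
      · intro c u _ hu
        rw [Pop_smul]; exact Submodule.smul_mem _ _ hu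
  have hfin := claim (n + m + 1)
  have hle : Submodule.span K
      ((fun ab : ℕ × ℕ => X ab.1 * Y ab.2) '' {ab | ab.1 + ab.2 = n + m + 1}) ≤ ⊥ := by
    rw [Submodule.span_le]
    rintro z ⟨⟨a, b⟩, hab, rfl⟩
    simp only [Set.mem_setOf_eq] at hab
    simp only [SetLike.mem_coe, Submodule.mem_bot]
    rcases Nat.lt_or_ge a (n + 1) with ha | ha
    · rw [hY0 b (by omega), mul_zero]
    · rw [hX0 a ha, zero_mul]
  have := hle hfin
  simpa [Kill] using this

lemma Kill_list (F : A) (d : ℤ) :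
    ∀ (l : List (A × ℕ)), (∀ p ∈ l, Kill F d (p.2 + 1) p.1) →
      Kill F d ((l.map Prod.snd).sum + 1) ((l.map Prod.fst).prod) := by
  intro l
  induction l with
  | nil => intro _; simpa using Kill_one F d
  | cons hd tl ih =>
    intro h
    have h1 : Kill F d (hd.2 + 1) hd.1 := h hd List.mem_cons_self
    have h2 := ih (fun p hp => h p (List.mem_cons_of_mem _ hp))
    have := Kill_mul h1 h2
    simp only [List.map_cons, List.sum_cons, List.prod_cons]
    exact this

end KillSec


section NestSec
variable {A : Type*} [Ring A] [Algebra K A]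

/-- The higher-order Serre operator. -/
def TopOp (L : ℕ) (d : ℤ) (g : A) (y : A) : A :=
  ∑ k ∈ Finset.range (L + 1),
    ((-1 : K) ^ k * qbinomd d (L : ℤ) k) • (g ^ k * y * g ^ (L - k))

lemma TopOp_zero (L : ℕ) (d : ℤ) (g : A) : TopOp L d g 0 = 0 := by simp [TopOp]

lemma TopOp_eq_ch {d : ℤ} (hd : 0 < d) (L : ℕ) (g : A) (y : A) :
    TopOp L d g y = ch g d L L y := by
  rw [ch_closed g hd, TopOp]
  apply Finset.sum_congr rfl
  intro k _
  congr 2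
  rw [sub_self, mul_zero, mul_zero, zpow_zero, mul_one]

lemma sum_piFinset_cons {M : Type*} [AddCommMonoid M] (mm L : ℕ)
    (f : (Fin (mm + 1) → ℕ) → M) :
    ∑ k ∈ Fintype.piFinset (fun _ : Fin (mm + 1) => Finset.range (L + 1)), f k
      = ∑ k0 ∈ Finset.range (L + 1),
          ∑ k' ∈ Fintype.piFinset (fun _ : Fin mm => Finset.range (L + 1)),
            f (Fin.cons k0 k') := by
  rw [← Finset.sum_product']
  apply Finset.sum_nbij' (i := fun k => (k 0, Fin.tail k)) (j := fun p => Fin.cons p.1 p.2)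
  · intro k hk
    simp only [Fintype.mem_piFinset] at hk
    simp only [Finset.mem_product, Fintype.mem_piFinset]
    exact ⟨hk 0, fun i => hk i.succ⟩
  · intro p hp
    simp only [Finset.mem_product, Fintype.mem_piFinset] at hp
    simp only [Fintype.mem_piFinset]
    intro i
    refine Fin.cases ?_ ?_ i
    · simpa using hp.1
    · intro j; simpa using hp.2 j
  · intro k _; exact Fin.cons_self_tail k
  · intro p _; simp [Fin.tail_cons]
  · intro k _; rw [Fin.cons_self_tail]

lemma nest (L : ℕ) (d : ℤ) :
    ∀ (mm : ℕ) (g : Fin mm → A) (x : A),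
      (∀ a b : Fin mm, a ≠ b → Commute (g a) (g b)) →
      (∑ k ∈ Fintype.piFinset (fun _ : Fin mm => Finset.range (L + 1)),
        (∏ a, ((-1 : K) ^ (k a) * qbinomd d (L : ℤ) (k a))) •
          ((List.ofFn fun a => g a ^ (k a)).prod * x *
            (List.ofFn fun a => g a ^ (L - k a)).prod))
      = (List.ofFn g).foldr (fun gi y => TopOp L d gi y) x := by
  intro mm
  induction mm with
  | zero =>
    intro g x _
    simp
  | succ mm ih =>
    intro g x hcomm
    rw [sum_piFinset_cons mm L]
    have hinner : ∀ k0 ∈ Finset.range (L + 1),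
        (∑ k' ∈ Fintype.piFinset (fun _ : Fin mm => Finset.range (L + 1)),
          (∏ a, ((-1 : K) ^ ((Fin.cons k0 k' : Fin (mm+1) → ℕ) a) * qbinomd d (L : ℤ) ((Fin.cons k0 k' : Fin (mm+1) → ℕ) a))) •
            ((List.ofFn fun a => g a ^ (Fin.cons k0 k' : Fin (mm+1) → ℕ) a).prod * x *
              (List.ofFn fun a => g a ^ (L - (Fin.cons k0 k' : Fin (mm+1) → ℕ) a)).prod))
        = ((-1 : K) ^ k0 * qbinomd d (L : ℤ) k0) •
            (g 0 ^ k0 *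
              ((List.ofFn fun a : Fin mm => g a.succ).foldr (fun gi y => TopOp L d gi y) x) *
              g 0 ^ (L - k0)) := by
      intro k0 _
      rw [← ih (fun a => g a.succ) x (fun a b hab => hcomm a.succ b.succ (by simpa using hab))]
      rw [Finset.mul_sum, Finset.sum_mul, Finset.smul_sum]
      refine Finset.sum_congr rfl ?_
      intro k' _
      have hcoef : (∏ a, ((-1 : K) ^ ((Fin.cons k0 k' : Fin (mm+1) → ℕ) a) * qbinomd d (L : ℤ) ((Fin.cons k0 k' : Fin (mm+1) → ℕ) a)))
          = ((-1 : K) ^ k0 * qbinomd d (L : ℤ) k0) *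
            ∏ a : Fin mm, ((-1 : K) ^ (k' a) * qbinomd d (L : ℤ) (k' a)) := by
        rw [Fin.prod_univ_succ]
        simp [Fin.cons_zero, Fin.cons_succ]
      have hL : (List.ofFn fun a : Fin (mm+1) => g a ^ (Fin.cons k0 k' : Fin (mm+1) → ℕ) a)
          = g 0 ^ k0 :: List.ofFn fun a : Fin mm => g a.succ ^ k' a := by
        rw [List.ofFn_succ]
        simp [Fin.cons_zero, Fin.cons_succ]
      have hR : (List.ofFn fun a : Fin (mm+1) => g a ^ (L - (Fin.cons k0 k' : Fin (mm+1) → ℕ) a))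
          = g 0 ^ (L - k0) :: List.ofFn fun a : Fin mm => g a.succ ^ (L - k' a) := by
        rw [List.ofFn_succ]
        simp [Fin.cons_zero, Fin.cons_succ]
      rw [hcoef, hL, hR, List.prod_cons, List.prod_cons, mul_smul]
      have hcomm0 : Commute (g 0 ^ (L - k0))
          ((List.ofFn fun a : Fin mm => g a.succ ^ (L - k' a)).prod) := by
        apply Commute.list_prod_right
        intro y hy
        rw [List.mem_ofFn] at hy
        obtain ⟨a, rfl⟩ := hy
        exact (hcomm 0 a.succ (by simp [Fin.succ_ne_zero, Ne, eq_comm])).pow_pow _ _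
      congr 1
      rw [mul_smul_comm, smul_mul_assoc]
      congr 1
      rw [hcomm0.eq]
      simp [mul_assoc]
    rw [Finset.sum_congr rfl hinner, List.ofFn_succ, List.foldr_cons]
    rfl

lemma foldr_TopOp_zero (L : ℕ) (d : ℤ) (x : A) :
    ∀ (l : List A), l ≠ [] → (∀ gi ∈ l, TopOp L d gi x = 0) →
      l.foldr (fun gi y => TopOp L d gi y) x = 0 := by
  intro l
  induction l with
  | nil => intro h; exact absurd rfl h
  | cons g0 tl ih =>
    intro _ h
    rcases eq_or_ne tl [] with rfl | htl
    · simpa using h g0 (by simp)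
    · rw [List.foldr_cons, ih htl (fun gi hgi => h gi (List.mem_cons_of_mem _ hgi)), TopOp_zero]

end NestSec


section Glue
variable {I : Type} [Fintype I] [DecidableEq I]

lemma serre_img (form : I → I → ℤ) {i j : I} (hij : i ≠ j) :
    (RingQuot.mkAlgHom K (serreRel form)) (serre form i j) = 0 := by
  have h := RingQuot.mkAlgHom_rel K (show serreRel form (serre form i j) 0 from
    ⟨i, j, hij, rfl, rfl⟩)
  simpa using h

lemma kill_of_serre (form : I → I → ℤ) {i j : I} (hij : i ≠ j) {d : ℤ} (hd0 : 0 < d)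
    (hdi : dd form i = d) (ρ : ℕ) (hρ : 1 - aij form i j = (ρ : ℤ)) :
    Kill (fgen form i) d ρ (fgen form j) := by
  have h0 := serre_img form hij
  rw [serre] at h0
  rw [map_sum] at h0
  simp only [map_smul, map_mul, map_pow] at h0
  have hE : (1 - aij form i j).toNat = ρ := by rw [hρ]; exact Int.toNat_natCast ρ
  rw [hE] at h0
  unfold Kill
  rw [ch_closed _ hd0]
  rw [← h0]
  apply Finset.sum_congr rfl
  intro k _
  congr 1
  rw [hdi, hρ, sub_self, mul_zero, mul_zero, zpow_zero, mul_one]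

lemma fgen_comm (form : I → I → ℤ) {i j : I} (hij : i ≠ j) (hdi : 0 < dd form i)
    (hform : form i j = 0) : Commute (fgen form i) (fgen form j) := by
  have haij0 : aij form i j = 0 := by simp [aij, hform]
  have h := kill_of_serre form hij hdi rfl 1 (by rw [haij0]; norm_num)
  unfold Kill ch ch at h
  norm_num [Pop] at h
  exact (sub_eq_zero.mp h).symm

end Glue



/-- let `η = {i_1,…,i_m}` (enumerated by the injection `e : Fin m → I`)
and `η'` (enumerated by the injection `e' : Fin w → I`) be disjoint subsets of `I`, with
orthogonality inside `η` and inside `η'`, common value `d = d_{i_a}`, and for each `a`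
a subset `A_a ⊆ η'` of cardinality `N−1` with `a_{i_a j} = 1−r` on `A_a` and
`(α_{i_a},α_j) = 0` off `A_a`.  With `L = (N−1)(r−1)+1`,
`Σ_{(k_1,…,k_m)∈{0,…,L}^m} (−1)^{k_1+⋯+k_m} [L ¦ k_1]_d ⋯ [L ¦ k_m]_d
  (f_{i_1}^{k_1}⋯f_{i_m}^{k_m}) (∏_{j∈η'} f_j) (f_{i_1}^{L−k_1}⋯f_{i_m}^{L−k_m}) = 0`
in `U_q^-`. -/

theorem stmt17 {I : Type} [Fintype I] [DecidableEq I] [Nonempty I]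
    (form : I → I → ℤ)
    (hsymm : ∀ i j, form i j = form j i)
    (hdiag_pos : ∀ i, 0 < form i i) (hdiag_even : ∀ i, 2 ∣ form i i)
    (hoff : ∀ i j, i ≠ j → 2 * form i j ≤ 0 ∧ form i i ∣ 2 * form i j)
    (r N : ℕ) (hr : 2 ≤ r) (hN : 2 ≤ N)
    (m w : ℕ) (hm : 1 ≤ m) (hw : 1 ≤ w)
    (e : Fin m → I) (he : Function.Injective e)
    (e' : Fin w → I) (he' : Function.Injective e')
    (hdisj : ∀ a b, e a ≠ e' b)
    (horthη : ∀ a b, a ≠ b → form (e a) (e b) = 0)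
    (horthη' : ∀ a b, a ≠ b → form (e' a) (e' b) = 0)
    (d : ℤ) (hd : ∀ a, dd form (e a) = d)
    (A : Fin m → Finset I)
    (hAsub : ∀ a, A a ⊆ Finset.univ.image e')
    (hAcard : ∀ a, (A a).card = N - 1)
    (haij : ∀ a, ∀ j ∈ A a, aij form (e a) j = 1 - (r : ℤ))
    (hzero : ∀ a, ∀ j ∈ Finset.univ.image e', j ∉ A a → form (e a) j = 0) :
    ∑ k ∈ Fintype.piFinset (fun _ : Fin m => Finset.range ((N - 1) * (r - 1) + 1 + 1)),
      ((-1 : K) ^ (∑ a, k a) *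
        ∏ a, qbinomd d (((N - 1) * (r - 1) + 1 : ℕ) : ℤ) (k a)) •
        ((List.ofFn fun a => (fgen form (e a)) ^ (k a)).prod *
          (List.ofFn fun b => fgen form (e' b)).prod *
          (List.ofFn fun a => (fgen form (e a)) ^ ((N - 1) * (r - 1) + 1 - k a)).prod) = 0 := by
  classical
  set L : ℕ := (N - 1) * (r - 1) + 1 with hL
  -- positivity of d
  have hd0 : 0 < d := by
    have a0 : Fin m := ⟨0, by omega⟩
    obtain ⟨c, hc⟩ := hdiag_even (e a0)
    have hpos := hdiag_pos (e a0)
    have : dd form (e a0) = c := by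
      rw [dd, hc, Int.mul_ediv_cancel_left c (by norm_num)]
    rw [← hd a0, this]
    omega
  -- the middle element
  set x : Uneg form := (List.ofFn fun b => fgen form (e' b)).prod with hx
  -- Kill for each a
  have hkill : ∀ a : Fin m, Kill (fgen form (e a)) d L x := by
    intro a
    set s : Fin w → ℕ := fun b => if e' b ∈ A a then r - 1 else 0 with hs
    have hmem : ∀ p ∈ List.ofFn (fun b : Fin w => (fgen form (e' b), s b)),
        Kill (fgen form (e a)) d (p.2 + 1) p.1 := by
      intro p hp
      rw [List.mem_ofFn] at hp
      obtain ⟨b, rfl⟩ := hp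
      simp only [hs]
      by_cases hb : e' b ∈ A a
      · rw [if_pos hb]
        apply kill_of_serre form (hdisj a b) hd0 (hd a)
        rw [haij a _ hb]
        push_cast
        omega
      · rw [if_neg hb]
        have hf0 : form (e a) (e' b) = 0 :=
          hzero a (e' b) (Finset.mem_image.mpr ⟨b, Finset.mem_univ b, rfl⟩) hb
        apply kill_of_serre form (hdisj a b) hd0 (hd a)
        simp [aij, hf0]
    have hKL := Kill_list (fgen form (e a)) d
      (List.ofFn (fun b : Fin w => (fgen form (e' b), s b))) hmem
    have hmap1 : (List.ofFn (fun b : Fin w => (fgen form (e' b), s b))).map Prod.fst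
        = List.ofFn fun b => fgen form (e' b) := by
      rw [List.map_ofFn]
      rfl
    have hmap2 : ((List.ofFn (fun b : Fin w => (fgen form (e' b), s b))).map Prod.snd).sum
        = ∑ b, s b := by
      rw [List.map_ofFn]
      rw [List.sum_ofFn]
      rfl
    have hsum : (∑ b, s b) = (N - 1) * (r - 1) := by
      rw [hs]
      rw [Finset.sum_ite, Finset.sum_const, Finset.sum_const_zero, add_zero, smul_eq_mul]
      have hcard : (Finset.univ.filter (fun b => e' b ∈ A a)).card = (A a).card := by
        apply Finset.card_bij (fun b _ => e' b)
        · intro b hb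
          exact (Finset.mem_filter.mp hb).2
        · intro b1 hb1 b2 hb2 hh
          exact he' hh
        · intro j hj
          obtain ⟨b, _, rfl⟩ := Finset.mem_image.mp (hAsub a hj)
          exact ⟨b, Finset.mem_filter.mpr ⟨Finset.mem_univ b, hj⟩, rfl⟩
      rw [hcard, hAcard]
    rw [hmap1, hmap2, hsum] at hKL
    exact hKL
  -- rewrite coefficient and apply nest
  have hco : ∀ k : Fin m → ℕ, ((-1 : K) ^ (∑ a, k a) * ∏ a, qbinomd d (L : ℤ) (k a))
      = ∏ a, ((-1 : K) ^ (k a) * qbinomd d (L : ℤ) (k a)) := by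
    intro k
    rw [Finset.prod_mul_distrib, Finset.prod_pow_eq_pow_sum]
  have hcomm : ∀ a b : Fin m, a ≠ b → Commute (fgen form (e a)) (fgen form (e b)) := by
    intro a b hab
    exact fgen_comm form (fun hh => hab (he hh)) (by rw [hd a]; exact hd0) (horthη a b hab)
  calc ∑ k ∈ Fintype.piFinset (fun _ : Fin m => Finset.range (L + 1)),
        ((-1 : K) ^ (∑ a, k a) * ∏ a, qbinomd d (L : ℤ) (k a)) •
          ((List.ofFn fun a => (fgen form (e a)) ^ (k a)).prod * x *
            (List.ofFn fun a => (fgen form (e a)) ^ (L - k a)).prod)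
      = ∑ k ∈ Fintype.piFinset (fun _ : Fin m => Finset.range (L + 1)),
        (∏ a, ((-1 : K) ^ (k a) * qbinomd d (L : ℤ) (k a))) •
          ((List.ofFn fun a => (fgen form (e a)) ^ (k a)).prod * x *
            (List.ofFn fun a => (fgen form (e a)) ^ (L - k a)).prod) := by
        refine Finset.sum_congr rfl ?_
        intro k _
        rw [hco]
    _ = (List.ofFn fun a => fgen form (e a)).foldr (fun gi y => TopOp L d gi y) x :=
        nest L d m (fun a => fgen form (e a)) x hcomm
    _ = 0 := by
        apply foldr_TopOp_zero
        · intro hnil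
          have := congrArg List.length hnil
          simp at this
          omega
        · intro gi hgi
          rw [List.mem_ofFn] at hgi
          obtain ⟨a, rfl⟩ := hgi
          rw [TopOp_eq_ch hd0]
          exact hkill a
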